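/- M_2 = S^{2×2}_{++} (every symmetric positive definite 2×2 matrix lies in M_2), whereas for every d ≥ 3 the inclusion M_d ⊂ S^{d×d}_{++} is strict, i.e. there exists a symmetric positive definite d×d matrix not belonging to M_d. -/

import Mathlib

set_option maxHeartbeats 1000000


/-- The set `𝕄_d = {Id − b⊗b : |b| = 1}` of symmetric matrices. -/
def MdBase (d : ℕ) : Set (Matrix (Fin d) (Fin d) ℝ) :=
  {M | ∃ b : Fin d → ℝ, (∑ i, (b i) ^ 2 = 1) ∧ M = 1 - Matrix.vecMulVec b b}

/-- The conic hull `𝕄_d^{conic}`: all finite sums `Σ αᵢ (Id − bᵢ⊗bᵢ)` with `αᵢ > 0`,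
`|bᵢ| = 1`. -/
def MdConic (d : ℕ) : Set (Matrix (Fin d) (Fin d) ℝ) :=
  {M | ∃ (m : ℕ) (α : Fin m → ℝ) (b : Fin m → Fin d → ℝ),
    (∀ i, 0 < α i) ∧ (∀ i, ∑ j, (b i j) ^ 2 = 1) ∧
    M = ∑ i, α i • (1 - Matrix.vecMulVec (b i) (b i))}

/-- `M_d`: the interior of `𝕄_d^{conic}` taken in the subspace `S^{d×d}` of symmetric
matrices (a matrix `R` is in the relative interior iff it is symmetric and there is an
open set `U ∋ R` of the matrix space such that every symmetric member of `U` lies in the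
conic hull). -/
def Md (d : ℕ) : Set (Matrix (Fin d) (Fin d) ℝ) :=
  {R | R.IsSymm ∧ ∃ U : Set (Matrix (Fin d) (Fin d) ℝ),
    IsOpen U ∧ R ∈ U ∧ ∀ S ∈ U, S.IsSymm → S ∈ MdConic d}

lemma mem_conic2 (S : Matrix (Fin 2) (Fin 2) ℝ) (hs : S.IsSymm)
    (ha : 0 < S 0 0) (hd : 0 < S.det) : S ∈ MdConic 2 := by
  set a := S 0 0 with ha'
  set b := S 0 1 with hb'
  set c := S 1 1 with hc'
  have hba : S 1 0 = b := hs.apply 0 1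
  have hdet : 0 < a * c - b * b := by
    have := hd; rw [Matrix.det_fin_two, hba] at this; linarith
  have hc : 0 < c := by nlinarith
  set sa := Real.sqrt a with hsa'
  set sc := Real.sqrt c with hsc'
  set st := Real.sqrt (a + c) with hst'
  have hsa2 : sa ^ 2 = a := Real.sq_sqrt ha.le
  have hsc2 : sc ^ 2 = c := Real.sq_sqrt hc.le
  have hst2 : st ^ 2 = a + c := Real.sq_sqrt (by linarith)
  have hsa0 : 0 < sa := Real.sqrt_pos.2 ha
  have hsc0 : 0 < sc := Real.sqrt_pos.2 hc
  have hst0 : 0 < st := Real.sqrt_pos.2 (by linarith)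
  set u := |b| with hu'
  have hu2 : u ^ 2 = b ^ 2 := sq_abs b
  have hub : b ≤ u := le_abs_self b
  have hub' : -u ≤ b := neg_abs_le b
  have hu0 : 0 ≤ u := abs_nonneg b
  have hult : u < sa * sc := by
    by_contra h
    push_neg at h
    have h2 : sa * sc * (sa * sc) ≤ u * u := mul_le_mul h h (by positivity) hu0
    nlinarith
  refine ⟨4, ![a * (sa * sc - u) / (2 * (sa * sc)),
               c * (sa * sc - u) / (2 * (sa * sc)),
               (a + c) * (sa * sc + u + 2 * b) / (4 * (sa * sc)),
               (a + c) * (sa * sc + u - 2 * b) / (4 * (sa * sc))],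
           ![![0, 1], ![1, 0], ![sc / st, -sa / st], ![sc / st, sa / st]], ?_, ?_, ?_⟩
  · intro i
    fin_cases i <;> simp <;>
      [skip; skip; skip; skip] <;>
      apply div_pos <;> nlinarith
  · intro i
    fin_cases i <;> simp [Fin.sum_univ_two] <;> field_simp <;> nlinarith
  · have hstst : st * st = a + c := by nlinarith
    have hq1 : sc / st * (sc / st) = c / (a + c) := by
      rw [div_mul_div_comm, hstst]; congr 1; nlinarith
    have hq2 : sa / st * (sa / st) = a / (a + c) := by
      rw [div_mul_div_comm, hstst]; congr 1; nlinarith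
    have hq3 : sc / st * (sa / st) = sa * sc / (a + c) := by
      rw [div_mul_div_comm, hstst, mul_comm sc sa]
    have hq4 : sa / st * (sc / st) = sa * sc / (a + c) := by
      rw [div_mul_div_comm, hstst]
    have hq5 : -sa / st * (-sa / st) = a / (a + c) := by rw [neg_div, neg_mul_neg]; exact hq2
    have hq6 : sc / st * (-sa / st) = -(sa * sc / (a + c)) := by rw [neg_div, mul_neg, hq3]
    have hq7 : -sa / st * (sc / st) = -(sa * sc / (a + c)) := by rw [neg_div, neg_mul, hq4]
    have hac : a + c ≠ 0 := by positivity
    have hsasc : sa * sc ≠ 0 := by positivity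
    ext i j
    fin_cases i <;> fin_cases j
    all_goals
      simp [Fin.sum_univ_four, Matrix.sum_apply, Matrix.smul_apply, Matrix.sub_apply,
        Matrix.one_apply, Matrix.vecMulVec_apply, Matrix.vecHead, Matrix.vecTail,
        hq1, hq2, hq3, hq4, hq5, hq6, hq7, hba]
    all_goals field_simp
    all_goals try simp only [← ha', ← hb', ← hc']
    all_goals try rw [hstst]
    all_goals ring

lemma part2 (d : ℕ) (hd : 3 ≤ d) :
    ∃ R : Matrix (Fin d) (Fin d) ℝ, R.IsSymm ∧ R.PosDef ∧ R ∉ Md d := by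
  haveI : NeZero d := ⟨by omega⟩
  set v : Fin d → ℝ := fun i => if i = 0 then 1 else 1/4 with hv
  have hvpos : ∀ i, 0 < v i := by intro i; dsimp [v]; split <;> norm_num
  refine ⟨Matrix.diagonal v, Matrix.isSymm_diagonal v, Matrix.PosDef.diagonal hvpos, ?_⟩
  rintro ⟨hsym, U, hU, hRU, hall⟩
  obtain ⟨m, α, b, hα, hb, hrep⟩ := hall _ hRU hsym
  set T := ∑ i, α i with hT
  have h00 : (1:ℝ) = ∑ i, α i * (1 - b i 0 * b i 0) := by
    have h := congrFun (congrFun hrep 0) 0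
    simpa [Matrix.sum_apply, Matrix.vecMulVec_apply, v] using h
  have hT1 : (1:ℝ) ≤ T := by
    rw [hT]
    calc (1:ℝ) = ∑ i, α i * (1 - b i 0 * b i 0) := h00
    _ ≤ ∑ i, α i := Finset.sum_le_sum (fun i _ => by nlinarith [hα i, sq_nonneg (b i 0)])
  have hdiag : ∑ j : Fin d, v j = (d:ℝ)/4 + 3/4 := by
    have hsplit : ∀ j : Fin d, v j = 1/4 + (if j = 0 then (3:ℝ)/4 else 0) := by
      intro j; dsimp [v]; split <;> norm_num
    simp_rw [hsplit, Finset.sum_add_distrib,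
      Finset.sum_ite_eq' Finset.univ (0 : Fin d) (fun _ => (3:ℝ)/4)]
    simp [Finset.card_univ, mul_comm]
    ring
  have htr2 : ((d:ℝ) - 1) * T = (d:ℝ)/4 + 3/4 := by
    have hlhs : ∑ j, (Matrix.diagonal v) j j = (d:ℝ)/4 + 3/4 := by
      simpa using hdiag
    have hrhs : ∑ j, (∑ i, α i • (1 - Matrix.vecMulVec (b i) (b i))) j j
        = ((d:ℝ) - 1) * T := by
      have hentry : ∀ j, (∑ i, α i • (1 - Matrix.vecMulVec (b i) (b i))) j j
          = ∑ i, α i * (1 - b i j * b i j) := by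
        intro j
        simp [Matrix.sum_apply, Matrix.vecMulVec_apply]
      simp_rw [hentry]
      rw [Finset.sum_comm]
      have hinner : ∀ i, ∑ j, α i * (1 - b i j * b i j) = α i * ((d:ℝ) - 1) := by
        intro i
        rw [← Finset.mul_sum]
        congr 1
        have hbi := hb i
        simp_rw [pow_two] at hbi
        rw [Finset.sum_sub_distrib, hbi, Finset.sum_const, Finset.card_univ,
          Fintype.card_fin, nsmul_eq_mul, mul_one]
      simp_rw [hinner]
      rw [← Finset.sum_mul, hT, mul_comm]
    rw [← hrhs, ← hrep]
    exact hlhs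
  have hd3 : (3:ℝ) ≤ (d:ℝ) := by exact_mod_cast hd
  nlinarith [mul_le_mul_of_nonneg_left hT1 (by linarith : (0:ℝ) ≤ (d:ℝ) - 1)]

lemma posdef_diag00 (M : Matrix (Fin 2) (Fin 2) ℝ) (h : M.PosDef) : 0 < M 0 0 := by
  have := h.diag_pos (i := 0)
  simpa using this

/-- `M_2` coincides with the symmetric positive definite `2×2` matrices, while for every
`d ≥ 3` the inclusion `M_d ⊂ S^{d×d}_{++}` is strict. -/
theorem M2_eq_posDef_and_Md_strict :
    (∀ R : Matrix (Fin 2) (Fin 2) ℝ, R.IsSymm → R.PosDef → R ∈ Md 2) ∧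
    (∀ d : ℕ, 3 ≤ d →
      ∃ R : Matrix (Fin d) (Fin d) ℝ, R.IsSymm ∧ R.PosDef ∧ R ∉ Md d) := by
  constructor
  · intro R hsym hpd
    refine ⟨hsym, {S | 0 < S 0 0 ∧ 0 < S.det}, ?_, ⟨posdef_diag00 R hpd, hpd.det_pos⟩, ?_⟩
    · apply IsOpen.inter
      · exact isOpen_lt continuous_const (Continuous.matrix_elem continuous_id 0 0)
      · exact isOpen_lt continuous_const (Continuous.matrix_det continuous_id)
    · intro S hS hSsym
      exact mem_conic2 S hSsym hS.1 hS.2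
  · exact part2
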